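/- Let (X, φ) be an algebraic convex geometry and C a maximal chain in the lattice L of closed sets. For x ∈ X define h_C(x) = ⋂{C' ∈ C : x ∈ C'}. Then h_C(x) ∈ C for every x, and h_C is injective. -/

import Mathlib

/-- φ is a closure operator: extensive, monotone, idempotent. -/
def IsClosureOp {X : Type*} (φ : Set X → Set X) : Prop :=
  (∀ A, A ⊆ φ A) ∧ (∀ A B, A ⊆ B → φ A ⊆ φ B) ∧ (∀ A, φ (φ A) = φ A)

/-- φ is algebraic (finitary): the closure of a set is the union of closures of its
finite subsets. -/
def IsAlgebraicOp {X : Type*} (φ : Set X → Set X) : Prop :=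
  ∀ A, φ A = ⋃₀ {T | ∃ B, B ⊆ A ∧ B.Finite ∧ T = φ B}

/-- The anti-exchange property. -/
def AntiExchange {X : Type*} (φ : Set X → Set X) : Prop :=
  ∀ (x y : X) (A : Set X), x ≠ y → φ A = A → x ∉ A →
    x ∈ φ (A ∪ {y}) → y ∉ φ (A ∪ {x})

/-- A convex geometry: a zero-closure operator with the anti-exchange property. -/
def IsConvexGeometry {X : Type*} (φ : Set X → Set X) : Prop :=
  IsClosureOp φ ∧ φ ∅ = ∅ ∧ AntiExchange φ

/-- An algebraic convex geometry. -/
def IsAlgConvexGeometry {X : Type*} (φ : Set X → Set X) : Prop :=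
  IsClosureOp φ ∧ IsAlgebraicOp φ ∧ φ ∅ = ∅ ∧ AntiExchange φ

/-- An algebraic subset of Pow X : closed under arbitrary intersections
(with ⋂₀ ∅ = X) and under unions of nonempty up-directed subfamilies. -/
def IsAlgSubset {X : Type*} (F : Set (Set X)) : Prop :=
  (∀ S ⊆ F, ⋂₀ S ∈ F) ∧
  (∀ S ⊆ F, S.Nonempty → (∀ A ∈ S, ∀ B ∈ S, ∃ C ∈ S, A ∪ B ⊆ C) → ⋃₀ S ∈ F)

/-- A maximal chain in the lattice of φ-closed sets. -/
def IsMaxChainOfClosed {X : Type*} (φ : Set X → Set X) (C : Set (Set X)) : Prop :=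
  C ⊆ {Y | φ Y = Y} ∧ IsChain (· ⊆ ·) C ∧
  ∀ T, φ T = T → (∀ A ∈ C, T ⊆ A ∨ A ⊆ T) → T ∈ C

/-- For a maximal chain C of an algebraic convex geometry, the map
h_C(x) = ⋂ {C' ∈ C : x ∈ C'} lands in C and is injective. -/
theorem stmt10 {X : Type*} (φ : Set X → Set X)
    (hacg : IsAlgConvexGeometry φ) (C : Set (Set X))
    (hC : IsMaxChainOfClosed φ C) :
    (∀ x : X, (⋂₀ {C' | C' ∈ C ∧ x ∈ C'}) ∈ C) ∧
      Function.Injective (fun x : X => ⋂₀ {C' | C' ∈ C ∧ x ∈ C'}) := by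
  obtain ⟨⟨hext, hmono, hidem⟩, halg, hempty, hax⟩ := hacg
  obtain ⟨hclosed, hchain, hmax⟩ := hC
  have hmemC : ∀ x : X, (⋂₀ {C' | C' ∈ C ∧ x ∈ C'}) ∈ C := by
    intro x
    refine hmax _ ?_ ?_
    · refine le_antisymm (Set.subset_sInter ?_) (hext _)
      intro A hA
      calc φ (⋂₀ {C' | C' ∈ C ∧ x ∈ C'}) ⊆ φ A :=
            hmono _ _ (Set.sInter_subset_of_mem hA)
        _ = A := hclosed hA.1
    · intro A hA
      by_cases hx : x ∈ A
      · exact Or.inl (Set.sInter_subset_of_mem ⟨hA, hx⟩)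
      · refine Or.inr (Set.subset_sInter ?_)
        intro B hB
        rcases eq_or_ne A B with rfl | hne
        · exact absurd hB.2 hx
        rcases hchain hA hB.1 hne with h | h
        · exact h
        · exact absurd (h hB.2) hx
  refine ⟨hmemC, ?_⟩
  intro x y hxy0
  by_contra hne
  have hxy : ⋂₀ {C' | C' ∈ C ∧ x ∈ C'} = ⋂₀ {C' | C' ∈ C ∧ y ∈ C'} := hxy0
  set D := ⋂₀ {C' | C' ∈ C ∧ x ∈ C'} with hDdef
  have hxD : x ∈ D := Set.mem_sInter.2 (fun A hA => hA.2)
  have hyD : y ∈ D := by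
    rw [hxy]; exact Set.mem_sInter.2 (fun A hA => hA.2)
  have hDC : D ∈ C := hmemC x
  have hDmin : ∀ A ∈ C, x ∈ A → D ⊆ A := fun A hA hx =>
    Set.sInter_subset_of_mem ⟨hA, hx⟩
  have hDminy : ∀ A ∈ C, y ∈ A → D ⊆ A := by
    intro A hA hy
    exact hxy.le.trans (Set.sInter_subset_of_mem ⟨hA, hy⟩)
  set B := ⋃₀ {C' | C' ∈ C ∧ x ∉ C'} with hBdef
  have hxB : x ∉ B := by
    rintro ⟨A, hA, hxA⟩
    exact hA.2 hxA
  have hBsub : ∀ A ∈ C, x ∈ A → B ⊆ A := by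
    intro A hA hx
    refine Set.sUnion_subset ?_
    intro A' hA'
    rcases eq_or_ne A' A with rfl | hne'
    · exact absurd hx hA'.2
    rcases hchain hA'.1 hA hne' with h | h
    · exact h
    · exact absurd (h hx) hA'.2
  have hBcl : φ B = B := by
    refine le_antisymm ?_ (hext _)
    intro t ht
    rw [halg B] at ht
    obtain ⟨T, ⟨F, hFB, hFfin, rfl⟩, htT⟩ := ht
    have key : ∀ F : Set X, F.Finite → F ⊆ B →
        F = ∅ ∨ ∃ A, (A ∈ C ∧ x ∉ A) ∧ F ⊆ A := by
      intro F hF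
      refine Set.Finite.induction_on
        (motive := fun F _ => F ⊆ B → F = ∅ ∨ ∃ A, (A ∈ C ∧ x ∉ A) ∧ F ⊆ A) F hF
        (fun _ => Or.inl rfl) ?_
      intro a s ha hs ih hins
      have haB : a ∈ B := hins (Set.mem_insert _ _)
      obtain ⟨A0, hA0, haA0⟩ := haB
      rcases ih (fun z hz => hins (Set.mem_insert_of_mem _ hz)) with rfl | ⟨A1, hA1, hsA1⟩
      · exact Or.inr ⟨A0, hA0, by simpa using haA0⟩
      · rcases eq_or_ne A0 A1 with rfl | hne'
        · exact Or.inr ⟨A0, hA0, Set.insert_subset haA0 hsA1⟩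
        rcases hchain hA0.1 hA1.1 hne' with h | h
        · exact Or.inr ⟨A1, hA1, Set.insert_subset (h haA0) hsA1⟩
        · exact Or.inr ⟨A0, hA0, Set.insert_subset haA0 (hsA1.trans h)⟩
    rcases key F hFfin hFB with rfl | ⟨A, hA, hFA⟩
    · rw [hempty] at htT
      exact absurd htT (Set.notMem_empty t)
    · have : t ∈ A := (hclosed hA.1) ▸ hmono _ _ hFA htT
      exact ⟨A, hA, this⟩
  have hBC : B ∈ C := by
    refine hmax _ hBcl ?_
    intro A hA
    by_cases hx : x ∈ A
    · exact Or.inl (hBsub A hA hx)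
    · exact Or.inr (Set.subset_sUnion_of_mem ⟨hA, hx⟩)
  have hBD : B ⊆ D := hBsub D hDC hxD
  have hyB : y ∉ B := by
    rintro ⟨A, hA, hyA⟩
    exact hA.2 (hDminy A hA.1 hyA hxD)
  have hE : ∀ z, z ∈ D → (∀ A ∈ C, z ∈ A → D ⊆ A) → φ (B ∪ {z}) = D := by
    intro z hzD hzmin
    have hsub : φ (B ∪ {z}) ⊆ D := by
      rw [← hclosed hDC]
      exact hmono _ _ (Set.union_subset hBD (Set.singleton_subset_iff.2 hzD))
    have hmem : φ (B ∪ {z}) ∈ C := by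
      refine hmax _ (hidem _) ?_
      intro A hA
      by_cases hz : z ∈ A
      · refine Or.inl ?_
        rw [← hclosed hA]
        exact hmono _ _ (Set.union_subset (hBsub A hA (hzmin A hA hz hxD))
          (Set.singleton_subset_iff.2 hz))
      · refine Or.inr ?_
        have hAB : A ⊆ B :=
          Set.subset_sUnion_of_mem ⟨hA, fun hx => hz (hDmin A hA hx hzD)⟩
        exact hAB.trans ((Set.subset_union_left).trans (hext _))
    have hzin : z ∈ φ (B ∪ {z}) := hext _ (Or.inr rfl)
    exact le_antisymm hsub (hzmin _ hmem hzin)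
  have hx' : φ (B ∪ {x}) = D := hE x hxD hDmin
  have hy' : φ (B ∪ {y}) = D := hE y hyD hDminy
  exact (hax x y B hne hBcl hxB (hy' ▸ hxD)) (hx' ▸ hyD)
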